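/- Let n ≥ 2 and let A ∈ ℝ^{n×n} be the matrix of the star system ẋ₁ = x₂ + x₃ + ⋯ + x_n, ẋᵢ = 0 for i = 2,…,n (i.e., the first row of A is (0,1,1,…,1) and all other rows are zero). For any S ⊆ {1,…,n} with |S| ≤ n − 2, the controllability matrix [𝕀(S), A𝕀(S), A²𝕀(S), …, A^{n−1}𝕀(S)] has rank strictly less than n; hence making the system ẋ = Ax + 𝕀(S)u controllable requires |S| ≥ n − 1 actuated nodes. -/

import Mathlib

open Matrix

/-- `𝕀(S)`: the diagonal `n×n` matrix whose `i`-th diagonal entry is `1` if `i ∈ S`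
and `0` otherwise. -/
def actuate {n : ℕ} (S : Finset (Fin n)) : Matrix (Fin n) (Fin n) ℝ :=
  Matrix.diagonal fun i => if i ∈ S then 1 else 0

/-- The controllability matrix `[B, AB, A²B, …, A^{n−1}B]` of the pair `(A, B)`,
as a single `n × (n·n)` matrix whose `(k, j)`-th block-column is column `j` of
`A^k B`. -/
def ctrbMatrix {n : ℕ} (A B : Matrix (Fin n) (Fin n) ℝ) :
    Matrix (Fin n) (Fin n × Fin n) ℝ :=
  Matrix.of fun i kj => (A ^ (kj.1 : ℕ) * B) i kj.2

/-- let `n ≥ 2` and let `A` be the matrix of the star system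
(first row `(0,1,…,1)`, all other rows zero).  For every `S` with `|S| ≤ n−2`,
the controllability matrix `[𝕀(S), A𝕀(S), …, A^{n−1}𝕀(S)]` has rank strictly
less than `n`; hence making `ẋ = Ax + 𝕀(S)u` controllable requires
`|S| ≥ n−1` actuated nodes. -/
theorem star_needs_many_actuators (n : ℕ) (hn : 2 ≤ n)
    (A : Matrix (Fin n) (Fin n) ℝ)
    (hA : A = Matrix.of fun (i j : Fin n) => if (i : ℕ) = 0 ∧ (j : ℕ) ≠ 0 then (1 : ℝ) else 0) :
    (∀ S : Finset (Fin n), S.card ≤ n - 2 → (ctrbMatrix A (actuate S)).rank < n) ∧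
    (∀ S : Finset (Fin n), (ctrbMatrix A (actuate S)).rank = n → n - 1 ≤ S.card) := by
  haveI : NeZero n := ⟨by omega⟩
  have main : ∀ S : Finset (Fin n), S.card ≤ n - 2 →
      (ctrbMatrix A (actuate S)).rank < n := by
    intro S hS
    have hcard : (insert (0 : Fin n) S).card < n := by
      have := Finset.card_insert_le (0 : Fin n) S
      omega
    obtain ⟨i₀, hi₀⟩ : ∃ i₀ : Fin n, i₀ ∉ insert (0 : Fin n) S := by
      by_contra h
      push_neg at h
      have : (insert (0 : Fin n) S) = Finset.univ := Finset.eq_univ_of_forall h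
      rw [this] at hcard
      simp at hcard
    have hi₀0 : i₀ ≠ 0 := fun h => hi₀ (by simp [h])
    have hi₀S : i₀ ∉ S := fun h => hi₀ (Finset.mem_insert_of_mem h)
    have hi₀0' : (i₀ : ℕ) ≠ 0 := fun h => hi₀0 (Fin.ext (by simp [h]))
    -- row i₀ of the controllability matrix is zero
    have hrow : ∀ (k : ℕ) (j : Fin n), (A ^ k * actuate S) i₀ j = 0 := by
      intro k j
      cases k with
      | zero =>
        simp only [pow_zero, Matrix.one_mul, actuate, Matrix.diagonal_apply]
        split
        · rename_i hij
          subst hij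
          simp [hi₀S]
        · rfl
      | succ k =>
        rw [pow_succ', Matrix.mul_assoc, Matrix.mul_apply]
        apply Finset.sum_eq_zero
        intro m _
        have hA0 : A i₀ m = 0 := by
          rw [hA]
          simp [hi₀0', hi₀0]
        simp [hA0]
    have hrow' : ∀ kj : Fin n × Fin n, ctrbMatrix A (actuate S) i₀ kj = 0 := by
      intro kj
      exact hrow kj.1 kj.2
    have hne : LinearMap.range (ctrbMatrix A (actuate S)).mulVecLin ≠ ⊤ := by
      intro htop
      have hmem : Pi.single i₀ (1 : ℝ) ∈
          LinearMap.range (ctrbMatrix A (actuate S)).mulVecLin := by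
        rw [htop]; trivial
      obtain ⟨x, hx⟩ := hmem
      have h1 := congrFun hx i₀
      rw [Matrix.mulVecLin_apply] at h1
      have h2 : (ctrbMatrix A (actuate S)).mulVec x i₀ = 0 := by
        simp only [Matrix.mulVec, dotProduct]
        apply Finset.sum_eq_zero
        intro kj _
        rw [hrow' kj, zero_mul]
      rw [h2] at h1
      simp at h1
    rw [Matrix.rank]
    have hlt : LinearMap.range (ctrbMatrix A (actuate S)).mulVecLin < ⊤ :=
      lt_of_le_of_ne le_top hne
    calc Module.finrank ℝ (LinearMap.range (ctrbMatrix A (actuate S)).mulVecLin)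
        < Module.finrank ℝ (Fin n → ℝ) := by
          have h3 := Submodule.finrank_lt_finrank_of_lt hlt
          rwa [finrank_top] at h3
      _ = n := by simp
  refine ⟨main, fun S h => ?_⟩
  by_contra hc
  push_neg at hc
  have := main S (by omega)
  omega
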